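/- Let n ≥ 1 and let i be any index with 1 ≤ i ≤ n. Then there exist matrices A_1, …, A_{n−1} ∈ M_n(ℕ) such that, with Y = E_{i,i}, one has Y + A_1·Y·A_1 + ⋯ + A_{n−1}·Y·A_{n−1} = I_n and A_1²·A_2²·⋯·A_{n−1}² = I_n. -/

import Mathlib

open Matrix Equiv

lemma aux_sum_diag (m : ℕ) :
    ∑ k : Fin m, Matrix.single k k (1 : ℕ) = 1 := by
  ext a b
  simp only [Matrix.sum_apply, Matrix.single, Matrix.of_apply, Matrix.one_apply]
  rw [Finset.sum_eq_single a]
  · by_cases h : a = b <;> simp [h, eq_comm]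
  · intro k _ hk; simp [hk]
  · simp

lemma aux_conj (m : ℕ) (σ : Equiv.Perm (Fin m)) (i : Fin m) :
    σ.toPEquiv.toMatrix * Matrix.single i i (1 : ℕ) * σ.toPEquiv.toMatrix
      = Matrix.single (σ.symm i) (σ i) 1 := by
  rw [PEquiv.toMatrix_toPEquiv_mul, PEquiv.mul_toMatrix_toPEquiv]
  ext a b
  simp only [Matrix.submatrix_apply, id, Matrix.single, Matrix.of_apply]
  congr 1
  rw [eq_iff_iff]
  constructor
  · rintro ⟨h1, h2⟩
    exact ⟨by simpa using congrArg σ.symm h1, by simpa using congrArg σ h2⟩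
  · rintro ⟨h1, h2⟩
    exact ⟨by simpa using congrArg σ h1, by simpa using congrArg σ.symm h2⟩

/-- For every index `i`, there exist matrices `A_1, …, A_{n-1} ∈ M_n(ℕ)` such that,
with `Y = E_{i,i}`, one has `Y + A_1·Y·A_1 + ⋯ + A_{n-1}·Y·A_{n-1} = I_n` and
`A_1²·A_2²·⋯·A_{n-1}² = I_n` (product in the listed order). -/
theorem stmt10 (n : ℕ) (hn : 1 ≤ n) (i : Fin n) :
    ∃ A : Fin (n - 1) → Matrix (Fin n) (Fin n) ℕ,
      Matrix.single i i 1
          + ∑ j : Fin (n - 1), A j * Matrix.single i i 1 * A j = 1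
        ∧ (List.ofFn fun j : Fin (n - 1) => (A j) ^ 2).prod = 1 := by
  obtain ⟨m, rfl⟩ : ∃ m, n = m + 1 := ⟨n - 1, by omega⟩
  refine ⟨fun j => (Equiv.swap i (i.succAbove j)).toPEquiv.toMatrix, ?_, ?_⟩
  · have key : ∀ j : Fin m,
        (Equiv.swap i (i.succAbove j)).toPEquiv.toMatrix
          * Matrix.single i i (1 : ℕ)
          * (Equiv.swap i (i.succAbove j)).toPEquiv.toMatrix
          = Matrix.single (i.succAbove j) (i.succAbove j) 1 := by
      intro j
      rw [aux_conj]
      congr 1 <;> simp [Equiv.swap_apply_left, Equiv.symm_swap]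
    calc Matrix.single i i 1
          + ∑ j : Fin m, (Equiv.swap i (i.succAbove j)).toPEquiv.toMatrix
            * Matrix.single i i (1 : ℕ)
            * (Equiv.swap i (i.succAbove j)).toPEquiv.toMatrix
        = Matrix.single i i 1
          + ∑ j : Fin m, Matrix.single (i.succAbove j) (i.succAbove j) 1 := by
          simp_rw [key]
      _ = ∑ k : Fin (m + 1), Matrix.single k k 1 :=
          (Fin.sum_univ_succAbove (fun k => Matrix.single k k (1 : ℕ)) i).symm
      _ = 1 := aux_sum_diag (m + 1)
  · have sq : ∀ j : Fin m,
        ((Equiv.swap i (i.succAbove j)).toPEquiv.toMatrix : Matrix (Fin (m+1)) (Fin (m+1)) ℕ) ^ 2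
          = 1 := by
      intro j
      rw [sq, ← PEquiv.toMatrix_trans, ← Equiv.toPEquiv_trans]
      simp [Equiv.toPEquiv_refl]
    simp [sq]
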